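/- The map τ = x + iy ↦ the 2×2 real matrix (x/y, −(x²+y²)/y; 1/y, −x/y) is SL(2,ℝ)-equivariant from the upper half-plane to End(ℝ²): for all g ∈ SL(2,ℝ) and τ ∈ H², M(g·τ) = g M(τ) g⁻¹, where g·τ is the Möbius action. -/

import Mathlib

open Matrix UpperHalfPlane

/-- The map `τ = x + iy ↦ (x/y, -(x²+y²)/y; 1/y, -x/y)` from the upper half-plane to
`End(ℝ²)` is `SL(2,ℝ)`-equivariant: `M (g • τ) = g * M τ * g⁻¹` for the Möbius action
on `ℍ` and the conjugation action on matrices. -/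
theorem M_equivariant
    (Mmap : ℍ → Matrix (Fin 2) (Fin 2) ℝ)
    (hM : ∀ τ : ℍ, Mmap τ =
      !![τ.re / τ.im, -(τ.re ^ 2 + τ.im ^ 2) / τ.im; 1 / τ.im, -τ.re / τ.im])
    (g : Matrix.SpecialLinearGroup (Fin 2) ℝ) (τ : ℍ) :
    Mmap (g • τ) =
      (g : Matrix (Fin 2) (Fin 2) ℝ) * Mmap τ * (g : Matrix (Fin 2) (Fin 2) ℝ)⁻¹ := by
  set a := (g : Matrix (Fin 2) (Fin 2) ℝ) 0 0 with ha
  set b := (g : Matrix (Fin 2) (Fin 2) ℝ) 0 1 with hb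
  set c := (g : Matrix (Fin 2) (Fin 2) ℝ) 1 0 with hc
  set d := (g : Matrix (Fin 2) (Fin 2) ℝ) 1 1 with hd
  have hdet : a * d - b * c = 1 := by
    have := g.2
    rw [Matrix.det_fin_two] at this
    exact this
  set x := τ.re with hx
  set y := τ.im with hy
  have hy0 : 0 < y := τ.im_pos
  have hyne : y ≠ 0 := hy0.ne'
  -- the denominator of the Möbius transform
  set N : ℝ := (c * x + d) ^ 2 + (c * y) ^ 2 with hN
  have hNne : N ≠ 0 := by
    intro h
    have h1 : c * x + d = 0 ∧ c * y = 0 := by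
      constructor <;> nlinarith [sq_nonneg (c * x + d), sq_nonneg (c * y)]
    have hc0 : c = 0 := by
      rcases mul_eq_zero.mp h1.2 with h' | h'
      · exact h'
      · exact absurd h' hyne
    have hd0 : d = 0 := by simpa [hc0] using h1.1
    rw [hc0, hd0] at hdet
    simp at hdet
  -- complex computations
  have hz : (τ : ℂ) = ⟨x, y⟩ := by
    apply Complex.ext <;> simp [hx, hy, UpperHalfPlane.coe_re, UpperHalfPlane.coe_im]
  have hsmul : ((g • τ : ℍ) : ℂ) =
      ((a : ℂ) * (τ : ℂ) + b) / ((c : ℂ) * (τ : ℂ) + d) := by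
    rw [UpperHalfPlane.specialLinearGroup_apply]
    simp [ha, hb, hc, hd]
  have hden : ((c : ℂ) * (τ : ℂ) + d) = ⟨c * x + d, c * y⟩ := by
    rw [hz]; apply Complex.ext <;> simp
  have hnum : ((a : ℂ) * (τ : ℂ) + b) = ⟨a * x + b, a * y⟩ := by
    rw [hz]; apply Complex.ext <;> simp
  have hre : (g • τ).re = ((a * x + b) * (c * x + d) + a * y * (c * y)) / N := by
    rw [← UpperHalfPlane.coe_re, hsmul, hnum, hden, Complex.div_re]
    simp [Complex.normSq]
    rw [hN]; ring
  have him : (g • τ).im = y / N := by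
    rw [← UpperHalfPlane.coe_im, hsmul, hnum, hden, Complex.div_im]
    have hns : Complex.normSq ⟨c * x + d, c * y⟩ = N := by
      simp [Complex.normSq, hN]; ring
    rw [hns]
    show a * y * (c * x + d) / N - (a * x + b) * (c * y) / N = y / N
    field_simp
    linear_combination hdet
  have hsq : (g • τ).re ^ 2 + (g • τ).im ^ 2 = ((a * x + b) ^ 2 + (a * y) ^ 2) / N := by
    rw [hre, him, div_pow, div_pow, ← add_div,
      div_eq_div_iff (pow_ne_zero 2 hNne) hNne]
    rw [hN]
    linear_combination (-(((c * x + d) ^ 2 + (c * y) ^ 2)) * y ^ 2 * (a * d - b * c + 1)) * hdet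
  -- inverse matrix
  have hinv : (g : Matrix (Fin 2) (Fin 2) ℝ)⁻¹ = !![d, -b; -c, a] := by
    rw [Matrix.inv_def, Matrix.adjugate_fin_two, g.2]
    simp [← ha, ← hb, ← hc, ← hd]
  have hg : (g : Matrix (Fin 2) (Fin 2) ℝ) = !![a, b; c, d] := by
    ext i j; fin_cases i <;> fin_cases j <;> rfl
  rw [hM, hM, hsq, hre, him, hinv, hg]
  ext i j
  fin_cases i <;> fin_cases j <;>
    · simp only [Matrix.mul_apply, Fin.sum_univ_succ, Finset.univ_unique, Fin.default_eq_zero,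
        Finset.sum_singleton, Fin.succ_zero_eq_one, Matrix.cons_val_zero, Matrix.cons_val_one,
        Matrix.head_cons, Matrix.head_fin_const, Matrix.cons_val_fin_one, Fin.zero_eta,
        Fin.mk_one, Matrix.of_apply, Matrix.cons_val']
      field_simp
      ring
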